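/- Let $G$ be a finite group and $n \geq 1$. Consider the poset $R = G \times [n]$ with order $(g,x) \prec_2 (h,y)$ iff $g = h$ and $x < y$, and $G$-action $h\cdot(g,i)=(hg,i)$. Then the chromatic number of the strong compatibility graph $\widetilde{C}_R$ equals $\min\{|G|, n\}$. -/

import Mathlib

/-- The poset `R = G × [n]` with the order `(g, x) ≺₂ (h, y)` iff `g = h` and `x < y`,
i.e. `(g, x) ⪯₂ (h, y)` iff `g = h` and `x ≤ y`. -/
def ord2 (G : Type*) (n : ℕ) : PartialOrder (G × Fin n) where
  le a b := a.1 = b.1 ∧ a.2 ≤ b.2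
  le_refl a := ⟨rfl, le_refl _⟩
  le_trans a b c hab hbc := ⟨hab.1.trans hbc.1, hab.2.trans hbc.2⟩
  le_antisymm a b hab hba := Prod.ext hab.1 (le_antisymm hab.2 hba.2)

/-- The strong compatibility graph of the `G`-poset `(G × [n], ≺₂)` with action
`h • (g, i) = (h * g, i)`. -/
def strongCompatGraph2 (G : Type*) [Group G] (n : ℕ) : SimpleGraph (G × Fin n) :=
  letI := ord2 G n
  SimpleGraph.fromRel (fun x y =>
    (¬ ∃ g : G, (g * x.1, x.2) = y) ∧
    ∃ g : G, g ≠ 1 ∧ (x ≤ (g * y.1, y.2) ∨ (g * y.1, y.2) ≤ x))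

lemma strongCompatGraph2_adj_iff (G : Type*) [Group G] (n : ℕ) (x y : G × Fin n) :
    (strongCompatGraph2 G n).Adj x y ↔ x.1 ≠ y.1 ∧ x.2 ≠ y.2 := by
  have key : ∀ a b : G × Fin n,
      ((¬ ∃ g : G, (g * a.1, a.2) = b) ∧
        ∃ g : G, g ≠ 1 ∧ ((ord2 G n).le a (g * b.1, b.2) ∨ (ord2 G n).le (g * b.1, b.2) a))
      ↔ (a.1 ≠ b.1 ∧ a.2 ≠ b.2) := by
    intro a b
    constructor
    · rintro ⟨hno, g, hg1, h | h⟩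
      · obtain ⟨h1, _⟩ := h
        refine ⟨fun hab => hg1 ?_, fun h2 => hno ⟨b.1 * a.1⁻¹, ?_⟩⟩
        · rw [hab] at h1; exact right_eq_mul.mp (show b.1 = g * b.1 from h1)
        · ext <;> simp [h2]
      · obtain ⟨h1, _⟩ := h
        refine ⟨fun hab => hg1 ?_, fun h2 => hno ⟨b.1 * a.1⁻¹, ?_⟩⟩
        · rw [hab] at h1; exact mul_eq_right.mp (show g * b.1 = b.1 from h1)
        · ext <;> simp [h2]
    · rintro ⟨h1, h2⟩
      refine ⟨fun ⟨g, hg⟩ => h2 (by rw [← hg]), a.1 * b.1⁻¹, ?_, ?_⟩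
      · intro h; apply h1; rwa [mul_inv_eq_one] at h
      · rcases le_total a.2 b.2 with h | h
        · exact Or.inl ⟨by simp, h⟩
        · exact Or.inr ⟨by simp, h⟩
  constructor
  · rintro ⟨hne, h | h⟩
    · exact (key x y).1 h
    · exact And.imp Ne.symm Ne.symm ((key y x).1 h)
  · rintro ⟨h1, h2⟩
    exact ⟨fun h => h1 (congrArg Prod.fst h), Or.inl ((key x y).2 ⟨h1, h2⟩)⟩

/-- The chromatic number of the strong compatibility graph of `(G × [n], ≺₂)` equals
`min (|G|, n)`. -/
theorem chromatic_strongCompatGraph2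
    (G : Type*) [Group G] [Fintype G] (n : ℕ) (hn : 1 ≤ n) :
    (strongCompatGraph2 G n).chromaticNumber
      = ((min (Fintype.card G) n : ℕ) : ℕ∞) := by
  set m := min (Fintype.card G) n with hm
  apply le_antisymm
  · -- upper bound
    rw [SimpleGraph.chromaticNumber_le_iff_colorable]
    rcases le_total (Fintype.card G) n with h | h
    · have : m = Fintype.card G := min_eq_left h
      rw [this]
      have C : (strongCompatGraph2 G n).Coloring G :=
        SimpleGraph.Coloring.mk (fun x => x.1) (by
          intro a b hab
          exact ((strongCompatGraph2_adj_iff G n a b).1 hab).1)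
      simpa using C.colorable
    · have : m = n := min_eq_right h
      rw [this]
      have C : (strongCompatGraph2 G n).Coloring (Fin n) :=
        SimpleGraph.Coloring.mk (fun x => x.2) (by
          intro a b hab
          exact ((strongCompatGraph2_adj_iff G n a b).1 hab).2)
      simpa using C.colorable
  · -- lower bound: clique of size m
    have hmG : m ≤ Fintype.card G := min_le_left _ _
    have hmn : m ≤ n := min_le_right _ _
    let f : Fin m ↪ G := (Fin.castLEEmb hmG).trans (Fintype.equivFin G).symm.toEmbedding
    let e : Fin m → G × Fin n := fun i => (f i, Fin.castLE hmn i)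
    have he : Function.Injective e := by
      intro i j hij
      exact Fin.castLE_injective hmn (congrArg Prod.snd hij)
    have hclique : (strongCompatGraph2 G n).IsClique
        (Finset.univ.map ⟨e, he⟩ : Finset (G × Fin n)) := by
      intro a ha b hb hab
      simp only [Finset.coe_map, Set.mem_image, Finset.coe_univ, Set.image_univ,
        Set.mem_range, Function.Embedding.coeFn_mk] at ha hb
      obtain ⟨i, rfl⟩ := ha
      obtain ⟨j, rfl⟩ := hb
      have hij : i ≠ j := fun h => hab (by rw [h])
      rw [strongCompatGraph2_adj_iff]
      constructor
      · exact fun h => hij (f.injective h)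
      · exact fun h => hij (Fin.castLE_injective hmn h)
    have := hclique.card_le_chromaticNumber
    simpa using this
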